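/- The set {n·1 + x^2 + x^4, n·1 + m·x^2, m·x^2 + t·x^4, n·1 + t·x^4 : n, m, t ∈ N} is a set of normal forms for the semiring N[x]/(x = 1 + x^2): every polynomial in N[x] is congruent to exactly one element of this set modulo the congruence generated by x = 1 + x^2. -/

import Mathlib

open Polynomial

namespace BlassNF

abbrev R := Polynomial ℕ

def rel : R → R → Prop := fun a b => a = X ∧ b = 1 + X^2

noncomputable abbrev cc : RingCon R := ringConGen rel

lemma L1 : cc X (1 + X^2) := RingConGen.Rel.of _ _ ⟨rfl, rfl⟩

lemma cc_of_eq {a b a' b' : R} (h : cc a b) (ha : a = a') (hb : b = b') : cc a' b' :=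
  ha ▸ hb ▸ h

lemma step (k : ℕ) (v : R) : cc (X^k * X + v) (X^k*(1+X^2) + v) :=
  cc.add (cc.mul (cc.refl _) L1) (cc.refl v)

lemma L2 : cc (X^2) (1 + 2*X^2 + X^4) := cc_of_eq (cc.mul L1 L1) (by ring) (by ring)

lemma L3 : cc (X^3) (X^2 + X^4) := cc_of_eq (cc.mul (cc.refl ((X:R)^2)) L1) (by ring) (by ring)

lemma L6 : cc (X^6) (2 + X^2 + X^4) := by
  have s0 : cc (X^6) (X^5 + X^7) := cc_of_eq (step 5 (0)) (by ring) (by ring)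
  have s1 : cc (X^5 + X^7) (X^4 + X^6 + X^7) := cc_of_eq (step 4 (X^7)) (by ring) (by ring)
  have s2 : cc (X^4 + X^6 + X^7) (X^3 + X^5 + X^6 + X^7) := cc_of_eq (step 3 (X^6 + X^7)) (by ring) (by ring)
  have s3 : cc (X^3 + X^5 + X^6 + X^7) (X^2 + X^4 + X^5 + X^6 + X^7) := cc_of_eq (step 2 (X^5 + X^6 + X^7)) (by ring) (by ring)
  have s4 : cc (X^2 + X^4 + X^5 + X^6 + X^7) (X^1 + X^3 + X^4 + X^5 + X^6 + X^7) := cc_of_eq (step 1 (X^4 + X^5 + X^6 + X^7)) (by ring) (by ring)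
  have s5 : cc (X^1 + X^3 + X^4 + X^5 + X^6 + X^7) (1 + X^2 + X^3 + X^4 + X^5 + X^6 + X^7) := cc_of_eq (step 0 (X^3 + X^4 + X^5 + X^6 + X^7)) (by ring) (by ring)
  have s6 : cc (1 + X^2 + X^3 + X^4 + X^5 + X^6 + X^7) (1 + X^1 + 2*X^3 + X^4 + X^5 + X^6 + X^7) := cc_of_eq (step 1 (1 + X^3 + X^4 + X^5 + X^6 + X^7)) (by ring) (by ring)
  have s7 : cc (1 + X^1 + 2*X^3 + X^4 + X^5 + X^6 + X^7) (2 + X^2 + 2*X^3 + X^4 + X^5 + X^6 + X^7) := cc_of_eq (step 0 (1 + 2*X^3 + X^4 + X^5 + X^6 + X^7)) (by ring) (by ring)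
  have s8 : cc (2 + X^2 + 2*X^3 + X^4 + X^5 + X^6 + X^7) (2 + X^2 + X^3 + 2*X^4 + X^6 + X^7) := cc_of_eq (step 3 (2 + X^2 + X^3 + X^4 + X^6 + X^7)).symm (by ring) (by ring)
  have s9 : cc (2 + X^2 + X^3 + 2*X^4 + X^6 + X^7) (2 + X^2 + X^3 + X^4 + X^5 + X^7) := cc_of_eq (step 4 (2 + X^2 + X^3 + X^4 + X^7)).symm (by ring) (by ring)
  have s10 : cc (2 + X^2 + X^3 + X^4 + X^5 + X^7) (2 + X^2 + X^3 + X^4 + X^6) := cc_of_eq (step 5 (2 + X^2 + X^3 + X^4)).symm (by ring) (by ring)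
  have s11 : cc (2 + X^2 + X^3 + X^4 + X^6) (2 + X^2 + X^3 + X^5) := cc_of_eq (step 4 (2 + X^2 + X^3)).symm (by ring) (by ring)
  have s12 : cc (2 + X^2 + X^3 + X^5) (2 + X^2 + X^4) := cc_of_eq (step 3 (2 + X^2)).symm (by ring) (by ring)
  exact ((((((((((((s0).trans s1).trans s2).trans s3).trans s4).trans s5).trans s6).trans s7).trans s8).trans s9).trans s10).trans s11).trans s12

lemma L4 : cc (X^4) (1 + X^2 + 2*X^4) := by
  have s1 : cc (X^4) (X^2 + 2*X^4 + X^6) := cc_of_eq (cc.mul L3 L1) (by ring) (by ring)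
  have s2 : cc (X^2 + 2*X^4 + X^6) (2 + 2*X^2 + 3*X^4) :=
    cc_of_eq (cc.add (cc.refl ((X:R)^2 + 2*X^4)) L6) rfl (by ring)
  have s3 : cc (2 + 2*X^2 + 3*X^4) (1 + X^2 + 2*X^4) :=
    (cc_of_eq (cc.add (cc.refl ((1:R) + 2*X^4)) L2) (by ring) (by ring)).symm
  exact (s1.trans s2).trans s3

noncomputable def G (a b c : ℕ) : R := (a:R) + (b:R)*X^2 + (c:R)*X^4

lemma GC (a b c : ℕ) : G a b c = C a + C b * X^2 + C c * X^4 := by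
  simp [G, C_eq_natCast]

lemma Hrem (a b c : ℕ) (h : 1 ≤ b + c) : ∀ k, cc (G (a+k) (b+k) (c+k)) (G a b c) := by
  intro k
  induction k with
  | zero => exact cc.refl _
  | succ k ih =>
    refine RingCon.trans _ ?_ ih
    rcases Nat.lt_or_ge 0 b with hb | hb
    · obtain ⟨b', rfl⟩ : ∃ b', b = b' + 1 := ⟨b-1, by omega⟩
      exact cc_of_eq (cc.add (cc.refl (((a+k:ℕ):R) + ((b'+k:ℕ):R)*X^2 + ((c+k:ℕ):R)*X^4)) L2).symm
        (by push_cast [G]; ring) (by push_cast [G]; ring)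
    · obtain ⟨c', rfl⟩ : ∃ c', c = c' + 1 := ⟨c-1, by omega⟩
      exact cc_of_eq (cc.add (cc.refl (((a+k:ℕ):R) + ((b+k:ℕ):R)*X^2 + ((c'+k:ℕ):R)*X^4)) L4).symm
        (by push_cast [G]; ring) (by push_cast [G]; ring)

lemma Hrem' {a b c a₀ b₀ c₀ k : ℕ} (h1 : a = a₀ + k) (h2 : b = b₀ + k) (h3 : c = c₀ + k)
    (h : 1 ≤ b₀ + c₀) : cc (G a b c) (G a₀ b₀ c₀) := by
  subst h1 h2 h3; exact Hrem a₀ b₀ c₀ h k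

lemma Emon : ∀ k : ℕ, ∃ a b c : ℕ, cc ((X:R)^k) (G a b c) := by
  intro k
  induction k with
  | zero => exact ⟨1,0,0, cc_of_eq (cc.refl 1) (by simp) (by push_cast [G]; ring)⟩
  | succ k ih =>
    obtain ⟨a,b,c,h⟩ := ih
    refine ⟨a+2*c, a+b+c, b+2*c, ?_⟩
    have s1 : cc ((X:R)^(k+1)) (G a b c * (1+X^2)) := cc_of_eq (cc.mul h L1) (by ring) rfl
    have s2 : cc (G a b c * (1+X^2)) (G (a+2*c) (a+b+c) (b+2*c)) :=
      cc_of_eq (cc.add (cc.refl ((a:R) + ((a+b:ℕ):R)*X^2 + ((b+c:ℕ):R)*X^4))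
          (cc.mul (cc.refl ((c:ℕ):R)) L6))
        (by push_cast [G]; ring) (by push_cast [G]; ring)
    exact s1.trans s2

lemma Epoly (p : R) : ∃ a b c : ℕ, cc p (G a b c) := by
  induction p using Polynomial.induction_on' with
  | add p q ih1 ih2 =>
    obtain ⟨a,b,c,h1⟩ := ih1
    obtain ⟨a',b',c',h2⟩ := ih2
    exact ⟨a+a', b+b', c+c', cc_of_eq (cc.add h1 h2) rfl (by push_cast [G]; ring)⟩
  | monomial n a =>
    obtain ⟨a',b',c',h⟩ := Emon n
    exact ⟨a*a', a*b', a*c', cc_of_eq (cc.mul (cc.refl (Polynomial.C a)) h)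
      (by rw [C_mul_X_pow_eq_monomial])
      (by simp only [GC, C_mul]; ring)⟩

def Shape (q : R) : Prop :=
  (∃ n : ℕ, q = (n : R) + X ^ 2 + X ^ 4) ∨
  (∃ n m : ℕ, q = (n : R) + (m : R) * X ^ 2) ∨
  (∃ m t : ℕ, q = (m : R) * X ^ 2 + (t : R) * X ^ 4) ∨
  (∃ n t : ℕ, q = (n : R) + (t : R) * X ^ 4)

lemma reduce (a b c : ℕ) : ∃ q : R, Shape q ∧ cc (G a b c) q := by
  rcases Nat.eq_zero_or_pos (b+c) with h|h
  · have hb : b = 0 := by omega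
    have hc : c = 0 := by omega
    subst hb hc
    exact ⟨G a 0 0, Or.inr (Or.inl ⟨a, 0, by push_cast [G]; ring⟩), cc.refl _⟩
  · rcases lt_trichotomy b c with hbc | hbc | hbc
    · rcases le_or_gt b a with hba | hba
      · exact ⟨G (a-b) 0 (c-b), Or.inr (Or.inr (Or.inr ⟨a-b, c-b, by push_cast [G]; ring⟩)),
          Hrem' (k := b) (by omega) (by omega) (by omega) (by omega)⟩
      · exact ⟨G 0 (b-a) (c-a), Or.inr (Or.inr (Or.inl ⟨b-a, c-a, by push_cast [G]; ring⟩)),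
          Hrem' (k := a) (by omega) (by omega) (by omega) (by omega)⟩
    · subst hbc
      rcases le_or_gt b (a+1) with hba | hba
      · exact ⟨G (a-(b-1)) 1 1, Or.inl ⟨a-(b-1), by push_cast [G]; ring⟩,
          Hrem' (k := b-1) (by omega) (by omega) (by omega) (by omega)⟩
      · exact ⟨G 0 (b-a) (b-a), Or.inr (Or.inr (Or.inl ⟨b-a, b-a, by push_cast [G]; ring⟩)),
          Hrem' (k := a) (by omega) (by omega) (by omega) (by omega)⟩
    · rcases le_or_gt c a with hca | hca
      · exact ⟨G (a-c) (b-c) 0, Or.inr (Or.inl ⟨a-c, b-c, by push_cast [G]; ring⟩),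
          Hrem' (k := c) (by omega) (by omega) (by omega) (by omega)⟩
      · exact ⟨G 0 (b-a) (c-a), Or.inr (Or.inr (Or.inl ⟨b-a, c-a, by push_cast [G]; ring⟩)),
          Hrem' (k := a) (by omega) (by omega) (by omega) (by omega)⟩

/-! ### Invariants -/

abbrev Mat := Matrix (Fin 2) (Fin 2) ℤ

def Mz : Mat := !![0,-1;1,1]

lemma castMat (z : ℤ) : ((z : Mat)) = !![z,0;0,z] := by
  rw [← Matrix.diagonal_intCast]
  ext i j
  fin_cases i <;> fin_cases j <;> simp [Matrix.diagonal]

lemma castMatNat (n : ℕ) : ((n:ℕ) : Mat) = !![(n:ℤ),0;0,(n:ℤ)] := by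
  rw [show ((n:ℕ):Mat) = ((n:ℤ):Mat) by push_cast; rfl, castMat]

lemma Mrel : (1 : Mat) + Mz^2 = Mz := by
  simp [Mz, pow_two, Matrix.mul_fin_two, Matrix.one_fin_two]

lemma phiG (a b c : ℕ) : aeval Mz (G a b c) = !![(a:ℤ)-b, (c:ℤ)-b; (b:ℤ)-c, (a:ℤ)-c] := by
  simp only [G, map_add, map_mul, map_pow, aeval_X, Mz, map_natCast, castMatNat]
  norm_num [pow_succ, Matrix.mul_fin_two]
  refine ⟨⟨?_, ?_⟩, ?_, ?_⟩ <;> ring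

lemma Dadd {p q : R} : (p+q).natDegree = 0 ↔ p.natDegree = 0 ∧ q.natDegree = 0 := by
  constructor
  · intro h
    have hc : ∀ k, k ≠ 0 → p.coeff k = 0 ∧ q.coeff k = 0 := by
      intro k hk
      have h2 : (p+q).coeff k = 0 := Polynomial.coeff_eq_zero_of_natDegree_lt (by omega)
      rw [Polynomial.coeff_add] at h2
      omega
    constructor
    · rw [Polynomial.natDegree_eq_zero]
      refine ⟨p.coeff 0, (Polynomial.ext fun k => ?_).symm⟩
      by_cases hk : k = 0
      · subst hk; simp
      · rw [(hc k hk).1, Polynomial.coeff_C, if_neg hk]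
    · rw [Polynomial.natDegree_eq_zero]
      refine ⟨q.coeff 0, (Polynomial.ext fun k => ?_).symm⟩
      by_cases hk : k = 0
      · subst hk; simp
      · rw [(hc k hk).2, Polynomial.coeff_C, if_neg hk]
  · intro ⟨h1,h2⟩
    have := Polynomial.natDegree_add_le p q
    omega

lemma DG (a b c : ℕ) : (G a b c).natDegree = 0 ↔ (b = 0 ∧ c = 0) := by
  constructor
  · intro h
    have h2 : (G a b c).coeff 2 = b := by
      simp [GC, coeff_C_mul, coeff_X_pow, coeff_C]
    have h4 : (G a b c).coeff 4 = c := by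
      simp [GC, coeff_C_mul, coeff_X_pow, coeff_C]
    have e2 : (G a b c).coeff 2 = 0 := Polynomial.coeff_eq_zero_of_natDegree_lt (by omega)
    have e4 : (G a b c).coeff 4 = 0 := Polynomial.coeff_eq_zero_of_natDegree_lt (by omega)
    omega
  · rintro ⟨rfl, rfl⟩
    simp [G]

lemma constZero {p : R} (hd : p.natDegree = 0) (h : aeval Mz p = 0) : p = 0 := by
  have hp := Polynomial.eq_C_of_natDegree_eq_zero hd
  rw [hp] at h ⊢
  rw [Polynomial.aeval_C] at h
  have h1 : ((p.coeff 0 : ℕ) : Mat) = 0 := by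
    rw [← h]; exact (eq_natCast (algebraMap ℕ Mat) _).symm
  rw [castMatNat] at h1
  have h0 : ((p.coeff 0 : ℕ) : ℤ) = 0 := by
    have := congrFun (congrFun h1 0) 0
    simpa using this
  have : p.coeff 0 = 0 := by exact_mod_cast h0
  rw [this, map_zero]

lemma inv {p q : R} (h : cc p q) :
    aeval Mz p = aeval Mz q ∧ (p.natDegree = 0 ↔ q.natDegree = 0) := by
  have h' : RingConGen.Rel rel p q := h
  clear h
  induction h' with
  | of a b hab =>
    obtain ⟨rfl, rfl⟩ := hab
    constructor
    · simp only [map_add, map_one, map_pow, aeval_X]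
      exact Mrel.symm
    · have d1 : (X : R).natDegree = 1 := natDegree_X
      have d2 : ((1:R)+X^2).natDegree ≠ 0 := by
        intro hd
        have := Polynomial.coeff_eq_zero_of_natDegree_lt (p := (1:R)+X^2) (n := 2) (by omega)
        simp at this
      constructor
      · intro h'; rw [d1] at h'; exact absurd h' one_ne_zero
      · intro h'; exact absurd h' d2
  | refl x => exact ⟨rfl, Iff.rfl⟩
  | symm _ ih => exact ⟨ih.1.symm, ih.2.symm⟩
  | trans _ _ ih1 ih2 => exact ⟨ih1.1.trans ih2.1, ih1.2.trans ih2.2⟩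
  | add _ _ ih1 ih2 =>
    refine ⟨by simp only [map_add, ih1.1, ih2.1], ?_⟩
    rw [Dadd, Dadd, ih1.2, ih2.2]
  | @mul w x y z _ _ ih1 ih2 =>
    refine ⟨by simp only [map_mul, ih1.1, ih2.1], ?_⟩
    have z1 : ∀ {u v : R}, aeval Mz u = aeval Mz v → (u.natDegree = 0 ↔ v.natDegree = 0) →
        u = 0 → v = 0 := by
      rintro u v hphi hdeg rfl
      exact constZero (hdeg.mp (by simp)) (by rw [← hphi]; simp)
    by_cases hw : w = 0
    · have hx := z1 ih1.1 ih1.2 hw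
      simp [hw, hx]
    by_cases hy : y = 0
    · have hz := z1 ih2.1 ih2.2 hy
      simp [hy, hz]
    by_cases hx : x = 0
    · exact absurd (z1 ih1.1.symm ih1.2.symm hx) hw
    by_cases hz : z = 0
    · exact absurd (z1 ih2.1.symm ih2.2.symm hz) hy
    rw [Polynomial.natDegree_mul hw hy, Polynomial.natDegree_mul hx hz]
    simp only [Nat.add_eq_zero]
    rw [ih1.2, ih2.2]

lemma shape_rep {q : R} (h : Shape q) :
    ∃ a b c, q = G a b c ∧ ((b = 1 ∧ c = 1) ∨ c = 0 ∨ a = 0 ∨ b = 0) := by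
  rcases h with ⟨n, rfl⟩ | ⟨n, m, rfl⟩ | ⟨m, t, rfl⟩ | ⟨n, t, rfl⟩
  · exact ⟨n,1,1, by push_cast [G]; ring, Or.inl ⟨rfl,rfl⟩⟩
  · exact ⟨n,m,0, by push_cast [G]; ring, Or.inr (Or.inl rfl)⟩
  · exact ⟨0,m,t, by push_cast [G]; ring, Or.inr (Or.inr (Or.inl rfl))⟩
  · exact ⟨n,0,t, by push_cast [G]; ring, Or.inr (Or.inr (Or.inr rfl))⟩

lemma nf_unique {q q' : R} (hs : Shape q) (hs' : Shape q') (h : cc q q') : q = q' := by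
  obtain ⟨a,b,c,rfl,C1⟩ := shape_rep hs
  obtain ⟨a',b',c',rfl,C2⟩ := shape_rep hs'
  obtain ⟨hphi, hdeg⟩ := inv h
  rw [phiG, phiG] at hphi
  have e1 : (a:ℤ) - b = (a':ℤ) - b' := congrFun (congrFun hphi 0) 0
  have e2 : (c:ℤ) - b = (c':ℤ) - b' := congrFun (congrFun hphi 0) 1
  rw [DG, DG] at hdeg
  obtain ⟨rfl, rfl, rfl⟩ : a = a' ∧ b = b' ∧ c = c' := by omega
  rfl

end BlassNF

open BlassNF in
/-- Blass's normal forms for `ℕ[x]/(x = 1 + x²)`: every polynomial is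
congruent to exactly one element of the displayed set. -/
theorem stmt_13 :
    ∀ p : Polynomial ℕ, ∃! q : Polynomial ℕ,
      ((∃ n : ℕ, q = (n : Polynomial ℕ) + X ^ 2 + X ^ 4) ∨
       (∃ n m : ℕ, q = (n : Polynomial ℕ) + (m : Polynomial ℕ) * X ^ 2) ∨
       (∃ m t : ℕ, q = (m : Polynomial ℕ) * X ^ 2 + (t : Polynomial ℕ) * X ^ 4) ∨
       (∃ n t : ℕ, q = (n : Polynomial ℕ) + (t : Polynomial ℕ) * X ^ 4)) ∧
      (ringConGen (fun a b : Polynomial ℕ => a = X ∧ b = 1 + X ^ 2)) p q := by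
  intro p
  obtain ⟨a,b,c,h⟩ := Epoly p
  obtain ⟨q, hs, hred⟩ := reduce a b c
  refine ⟨q, ⟨hs, cc.trans h hred⟩, ?_⟩
  rintro q' ⟨hs', hcc'⟩
  exact nf_unique hs' hs (cc.trans (cc.symm hcc') (cc.trans h hred))
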